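/- arXiv:1904.10437 — 2 statements merged into one kernel-verified Lean document; each statement's English description precedes it below -/
import Mathlib

section
/- For a Hermitian matrix X and a positive definite matrix σ, the limit as α → ∞ of ‖σ^{(1-α)/(2α)} X σ^{(1-α)/(2α)}‖_α equals ‖σ^{-1/2} X σ^{-1/2}‖_∞ (the operator norm). -/
open scoped Classical
open Matrix ComplexOrder

noncomputable section

variable {n : Type*} [Fintype n] [DecidableEq n]

/-- Real power of a (Hermitian) matrix via the continuous functional calculus. -/
noncomputable def mpow (A : Matrix n n ℂ) (r : ℝ) : Matrix n n ℂ :=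
  cfc (fun x : ℝ => x ^ r) A

/-- Schatten `p`-norm `(Tr[(Y†Y)^(p/2)])^(1/p)`. -/
noncomputable def schattenNorm (p : ℝ) (Y : Matrix n n ℂ) : ℝ :=
  ((mpow (Yᴴ * Y) (p / 2)).trace).re ^ (1 / p)

/-- `μ_α(X‖σ) = ‖σ^{(1-α)/(2α)} X σ^{(1-α)/(2α)}‖_α`. -/
noncomputable def muAlpha (α : ℝ) (X σ : Matrix n n ℂ) : ℝ :=
  schattenNorm α (mpow σ ((1 - α) / (2 * α)) * X * mpow σ ((1 - α) / (2 * α)))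

/-- Operator norm (Schatten `∞`-norm) of a matrix. -/
noncomputable def opNorm (Y : Matrix n n ℂ) : ℝ :=
  ‖Matrix.toEuclideanCLM (𝕜 := ℂ) Y‖

-- auxiliary lemmas

lemma aux_contOn {s : Set ℝ} (hs : s.Finite) (f : ℝ → ℝ) : ContinuousOn f s := by
  have := hs.to_subtype
  rw [continuousOn_iff_continuous_restrict]
  exact continuous_of_discreteTopology

lemma aux_trace_cfc {Z : Matrix n n ℂ} (hZ : Z.IsHermitian) (f : ℝ → ℝ) :
    (cfc f Z).trace = ∑ i, (f (hZ.eigenvalues i) : ℂ) := by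
  rw [hZ.cfc_eq, Matrix.IsHermitian.cfc, Unitary.conjStarAlgAut_apply, trace_mul_cycle,
    Unitary.star_mul_self_of_mem (SetLike.coe_mem _), one_mul, trace_diagonal]
  rfl

open scoped Matrix.Norms.L2Operator in
lemma aux_opNorm_eq [Nonempty n] {Z : Matrix n n ℂ} (hZ : Z.IsHermitian) :
    ∃ i, opNorm Z = |hZ.eigenvalues i| ∧ ∀ j, |hZ.eigenvalues j| ≤ opNorm Z := by
  letI : CompleteSpace (Matrix n n ℂ) := FiniteDimensional.complete ℂ _
  letI : CStarAlgebra (Matrix n n ℂ) := {}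
  have hsp : spectrum ℂ Z = Set.range (fun i => (hZ.eigenvalues i : ℂ)) := by
    conv_lhs => rw [hZ.spectral_theorem, Unitary.conjStarAlgAut_apply, Unitary.spectrum_star_right_conjugate, spectrum_diagonal]
    ext; simp [Function.comp]
  have h1 : spectralRadius ℂ Z = ‖Z‖₊ := IsSelfAdjoint.spectralRadius_eq_nnnorm hZ
  have h2 : spectralRadius ℂ Z = ⨆ i, (‖hZ.eigenvalues i‖₊ : ENNReal) := by
    rw [spectralRadius, hsp, iSup_range]
    simp
  obtain ⟨i, hi⟩ := Finite.exists_max fun i => |hZ.eigenvalues i|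
  have h3 : (⨆ i, (‖hZ.eigenvalues i‖₊ : ENNReal)) = (‖hZ.eigenvalues i‖₊ : ENNReal) := by
    refine le_antisymm (iSup_le fun j => ?_) (le_iSup (fun i => (‖hZ.eigenvalues i‖₊ : ENNReal)) i)
    have : ‖hZ.eigenvalues j‖₊ ≤ ‖hZ.eigenvalues i‖₊ := by
      simpa [← NNReal.coe_le_coe, Real.norm_eq_abs] using hi j
    exact_mod_cast this
  have h4 : ‖Z‖₊ = ‖hZ.eigenvalues i‖₊ := by
    have := h1.symm.trans (h2.trans h3)
    exact_mod_cast this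
  have h5 : opNorm Z = |hZ.eigenvalues i| := by
    have : ‖Z‖ = ‖hZ.eigenvalues i‖ := by
      simpa using congrArg NNReal.toReal h4
    rw [← Real.norm_eq_abs]
    exact this
  exact ⟨i, h5, fun j => h5 ▸ hi j⟩

lemma aux_schatten_eq {Z : Matrix n n ℂ} (hZ : Z.IsHermitian) {α : ℝ} (hα : 1 ≤ α) :
    schattenNorm α Z = (∑ i, |hZ.eigenvalues i| ^ α) ^ (1 / α) := by
  have hsa : IsSelfAdjoint Z := hZ
  have h2 : Zᴴ * Z = Z ^ 2 := by rw [hZ.eq, sq]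
  have hcont : ContinuousOn (fun x : ℝ => x ^ (α / 2)) ((· ^ 2) '' spectrum ℝ Z) :=
    aux_contOn (Matrix.finite_real_spectrum.image _) _
  have hcomp : mpow (Zᴴ * Z) (α / 2) = cfc (fun x : ℝ => (x ^ 2) ^ (α / 2)) Z := by
    rw [mpow, h2, ← cfc_comp_pow (fun x : ℝ => x ^ (α / 2)) 2 Z hcont hsa]
  have habs : ∀ x : ℝ, ((x ^ 2 : ℝ)) ^ (α / 2) = |x| ^ α := by
    intro x
    rw [← sq_abs, ← Real.rpow_natCast |x| 2, ← Real.rpow_mul (abs_nonneg x)]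
    push_cast
    ring_nf
  rw [schattenNorm, hcomp, aux_trace_cfc hZ]
  congr 1
  have : (∑ i, (((fun x : ℝ => (x ^ 2) ^ (α / 2)) (hZ.eigenvalues i) : ℝ) : ℂ)) =
      ((∑ i, |hZ.eigenvalues i| ^ α : ℝ) : ℂ) := by
    push_cast
    exact Finset.sum_congr rfl fun i _ => by rw [habs]
  rw [this, Complex.ofReal_re]

lemma aux_schatten_bounds [Nonempty n] {Z : Matrix n n ℂ} (hZ : Z.IsHermitian) {α : ℝ}
    (hα : 1 ≤ α) :
    opNorm Z ≤ schattenNorm α Z ∧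
      schattenNorm α Z ≤ (Fintype.card n : ℝ) ^ (1 / α) * opNorm Z := by
  have hα0 : 0 < α := lt_of_lt_of_le one_pos hα
  obtain ⟨i, hi, hall⟩ := aux_opNorm_eq hZ
  set M := opNorm Z with hM
  have hM0 : 0 ≤ M := hi ▸ abs_nonneg _
  have hs := aux_schatten_eq hZ hα
  have hsum0 : 0 ≤ ∑ j, |hZ.eigenvalues j| ^ α :=
    Finset.sum_nonneg fun j _ => Real.rpow_nonneg (abs_nonneg _) _
  have hle1 : M ^ α ≤ ∑ j, |hZ.eigenvalues j| ^ α := by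
    rw [hi]
    exact Finset.single_le_sum (f := fun j => |hZ.eigenvalues j| ^ α)
      (fun j _ => Real.rpow_nonneg (abs_nonneg _) _) (Finset.mem_univ i)
  have hle2 : ∑ j, |hZ.eigenvalues j| ^ α ≤ (Fintype.card n : ℝ) * M ^ α := by
    calc ∑ j, |hZ.eigenvalues j| ^ α ≤ ∑ _j : n, M ^ α :=
          Finset.sum_le_sum fun j _ => Real.rpow_le_rpow (abs_nonneg _) (hall j) hα0.le
      _ = (Fintype.card n : ℝ) * M ^ α := by
          rw [Finset.sum_const, nsmul_eq_mul, Finset.card_univ]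
  have hMα : (M ^ α) ^ (1 / α) = M := by
    rw [← Real.rpow_mul hM0, mul_one_div_cancel hα0.ne', Real.rpow_one]
  constructor
  · calc M = (M ^ α) ^ (1 / α) := hMα.symm
      _ ≤ (∑ j, |hZ.eigenvalues j| ^ α) ^ (1 / α) :=
          Real.rpow_le_rpow (Real.rpow_nonneg hM0 _) hle1 (by positivity)
      _ = schattenNorm α Z := hs.symm
  · rw [hs]
    calc (∑ j, |hZ.eigenvalues j| ^ α) ^ (1 / α)
        ≤ ((Fintype.card n : ℝ) * M ^ α) ^ (1 / α) :=
          Real.rpow_le_rpow hsum0 hle2 (by positivity)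
      _ = (Fintype.card n : ℝ) ^ (1 / α) * M := by
          rw [Real.mul_rpow (by positivity) (Real.rpow_nonneg hM0 _), hMα]

lemma aux_mpow_eq {σ : Matrix n n ℂ} (hσ : σ.PosDef) (r : ℝ) :
    mpow σ r = (Matrix.IsHermitian.eigenvectorUnitary hσ.1 : Matrix n n ℂ) *
      diagonal (fun i => ((hσ.1.eigenvalues i ^ r : ℝ) : ℂ)) *
      star (Matrix.IsHermitian.eigenvectorUnitary hσ.1 : Matrix n n ℂ) := by
  rw [mpow, hσ.1.cfc_eq]
  rfl

lemma aux_mpow_isHermitian (σ : Matrix n n ℂ) (r : ℝ) : (mpow σ r).IsHermitian := by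
  have : IsSelfAdjoint (mpow σ r) := by
    rw [mpow]
    exact cfc_predicate _ _
  exact this

lemma aux_continuous_mpow {σ : Matrix n n ℂ} (hσ : σ.PosDef) :
    Continuous fun r : ℝ => mpow σ r := by
  simp only [aux_mpow_eq hσ]
  refine (Continuous.matrix_mul ?_ continuous_const)
  refine (Continuous.matrix_mul continuous_const ?_)
  refine Continuous.matrix_diagonal ?_
  refine continuous_pi fun i => Complex.continuous_ofReal.comp ?_
  have h2 : Continuous fun r : ℝ => Real.exp (Real.log (hσ.1.eigenvalues i) * r) :=
    Real.continuous_exp.comp (continuous_const.mul continuous_id)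
  exact h2.congr fun r => (Real.rpow_def_of_pos (hσ.eigenvalues_pos i) r).symm

open scoped Matrix.Norms.L2Operator in
lemma aux_continuous_opNorm : Continuous fun Z : Matrix n n ℂ => opNorm Z := by
  have : (fun Z : Matrix n n ℂ => opNorm Z) = fun Z : Matrix n n ℂ => ‖Z‖ := rfl
  rw [this]
  exact continuous_norm

/-- `lim_{α→∞} μ_α(X‖σ) = ‖σ^{-1/2} X σ^{-1/2}‖_∞`. -/
theorem tendsto_muAlpha_atTop {d : ℕ}
    (X σ : Matrix (Fin d) (Fin d) ℂ) (hX : X.IsHermitian) (hX0 : X ≠ 0)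
    (hσ : σ.PosDef) :
    Filter.Tendsto (fun α : ℝ => muAlpha α X σ) Filter.atTop
      (nhds (opNorm (mpow σ (-(1 / 2 : ℝ)) * X * mpow σ (-(1 / 2 : ℝ))))) := by
  have hd : 0 < d := by
    rcases Nat.eq_zero_or_pos d with h | h
    · subst h
      exact absurd (Subsingleton.elim X 0) hX0
    · exact h
  haveI : Nonempty (Fin d) := ⟨⟨0, hd⟩⟩
  set e : ℝ → ℝ := fun α => (1 - α) / (2 * α) with he
  set P : ℝ → Matrix (Fin d) (Fin d) ℂ := fun α => mpow σ (e α) with hP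
  set Y : ℝ → Matrix (Fin d) (Fin d) ℂ := fun α => P α * X * P α with hY
  set Yinf : Matrix (Fin d) (Fin d) ℂ :=
    mpow σ (-(1 / 2 : ℝ)) * X * mpow σ (-(1 / 2 : ℝ)) with hYinf
  have hYherm : ∀ α, (Y α).IsHermitian := by
    intro α
    have hPh := aux_mpow_isHermitian σ (e α)
    show ((P α * X * P α)ᴴ = P α * X * P α)
    rw [conjTranspose_mul, conjTranspose_mul, hPh.eq, hX.eq, mul_assoc]
  have hmu : ∀ α, muAlpha α X σ = schattenNorm α (Y α) := fun α => rfl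
  -- limit of exponent
  have hTe : Filter.Tendsto e Filter.atTop (nhds (-(1 / 2 : ℝ))) := by
    have h1 : Filter.Tendsto (fun α : ℝ => (α⁻¹ - 1) / 2) Filter.atTop
        (nhds (((0 : ℝ) - 1) / 2)) :=
      (tendsto_inv_atTop_zero.sub_const 1).div_const 2
    have h2 : ((0 : ℝ) - 1) / 2 = -(1 / 2 : ℝ) := by norm_num
    rw [h2] at h1
    refine h1.congr' ?_
    filter_upwards [Filter.eventually_gt_atTop (0 : ℝ)] with α hα
    show (α⁻¹ - 1) / 2 = (1 - α) / (2 * α)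
    rw [eq_div_iff (by positivity : (2 * α) ≠ 0)]
    field_simp
  have hTP : Filter.Tendsto P Filter.atTop (nhds (mpow σ (-(1 / 2 : ℝ)))) :=
    ((aux_continuous_mpow hσ).tendsto _).comp hTe
  have hcontY : Continuous fun M : Matrix (Fin d) (Fin d) ℂ => M * X * M :=
    (continuous_id.matrix_mul continuous_const).matrix_mul continuous_id
  have hTY : Filter.Tendsto Y Filter.atTop (nhds Yinf) := (hcontY.tendsto _).comp hTP
  have hTN : Filter.Tendsto (fun α => opNorm (Y α)) Filter.atTop (nhds (opNorm Yinf)) :=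
    (aux_continuous_opNorm.tendsto _).comp hTY
  have hub : Filter.Tendsto (fun α : ℝ => (d : ℝ) ^ (1 / α) * opNorm (Y α)) Filter.atTop
      (nhds (opNorm Yinf)) := by
    have hd0 : (d : ℝ) ≠ 0 := Nat.cast_ne_zero.2 hd.ne'
    have h1 : Filter.Tendsto (fun α : ℝ => 1 / α) Filter.atTop (nhds (0 : ℝ)) := by
      simpa [one_div] using tendsto_inv_atTop_zero
    have h2 : Filter.Tendsto (fun α : ℝ => (d : ℝ) ^ (1 / α)) Filter.atTop
        (nhds ((d : ℝ) ^ (0 : ℝ))) :=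
      ((Real.continuousAt_const_rpow hd0).tendsto).comp h1
    rw [Real.rpow_zero] at h2
    simpa using h2.mul hTN
  refine tendsto_of_tendsto_of_tendsto_of_le_of_le' hTN hub ?_ ?_
  · filter_upwards [Filter.eventually_ge_atTop (1 : ℝ)] with α hα
    rw [hmu α]
    exact (aux_schatten_bounds (hYherm α) hα).1
  · filter_upwards [Filter.eventually_ge_atTop (1 : ℝ)] with α hα
    rw [hmu α]
    simpa [Fintype.card_fin] using (aux_schatten_bounds (hYherm α) hα).2
end
end

section
/- Let Y_XB = Σ_x p(x)|x⟩⟨x| ⊗ Y_B^x be a block-diagonal Hermitian matrix with probability weights p(x), and σ_XB = Σ_x q(x)|x⟩⟨x| ⊗ σ_B^x with q(x) > 0 and σ_B^x positive definite. Then for α > 1: ν_α(Y_XB‖σ_XB) ≥ Σ_x p(x) ν_α(Y_B^x‖σ_B^x) + ((α-1)/α) D(p‖q), where D(p‖q) = Σ_x p(x) log₂(p(x)/q(x)). -/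
open scoped Classical
open Matrix ComplexOrder

set_option linter.unusedSectionVars false
set_option linter.unusedVariables false

noncomputable section

variable {n : Type*} [Fintype n] [DecidableEq n]

-- continuity of anything on a matrix spectrum
lemma contOn_spec (f : ℝ → ℝ) (A : Matrix n n ℂ) : ContinuousOn f (spectrum ℝ A) := by
  rw [continuousOn_iff_continuous_restrict]
  have : Finite (spectrum ℝ A) := A.finite_real_spectrum
  exact continuous_of_discreteTopology

section Blk
variable {ι : Type*} [Fintype ι] [DecidableEq ι] {d : ℕ}

def blk (M : ι → Matrix (Fin d) (Fin d) ℂ) : Matrix (ι × Fin d) (ι × Fin d) ℂ :=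
  fun a b => if a.1 = b.1 then M a.1 a.2 b.2 else 0

lemma blk_one : blk (fun _ : ι => (1 : Matrix (Fin d) (Fin d) ℂ)) = 1 := by
  ext ⟨x, i⟩ ⟨y, j⟩
  simp only [blk, Matrix.one_apply, Prod.mk.injEq]
  by_cases h : x = y <;> by_cases h2 : i = j <;> simp [h, h2]

lemma blk_mul (M N : ι → Matrix (Fin d) (Fin d) ℂ) :
    blk M * blk N = blk (fun x => M x * N x) := by
  ext ⟨x, i⟩ ⟨y, j⟩
  simp only [blk, Matrix.mul_apply, Fintype.sum_prod_type]
  by_cases h : x = y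
  · subst h
    simp [Finset.sum_ite_eq', Finset.sum_ite_eq]
  · simp only [if_neg h]
    refine Finset.sum_eq_zero fun z _ => Finset.sum_eq_zero fun k _ => ?_
    by_cases hz : x = z
    · subst hz; simp [h]
    · simp [hz]

lemma blk_add (M N : ι → Matrix (Fin d) (Fin d) ℂ) :
    blk M + blk N = blk (fun x => M x + N x) := by
  ext ⟨x, i⟩ ⟨y, j⟩
  by_cases h : x = y <;> simp [blk, h]

lemma blk_smul (c : ℝ) (M : ι → Matrix (Fin d) (Fin d) ℂ) :
    c • blk M = blk (fun x => c • M x) := by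
  ext ⟨x, i⟩ ⟨y, j⟩
  by_cases h : x = y <;> simp [blk, h]

def blkAlgHom : (∀ _ : ι, Matrix (Fin d) (Fin d) ℂ) →ₐ[ℝ] Matrix (ι × Fin d) (ι × Fin d) ℂ where
  toFun := blk
  map_one' := blk_one
  map_mul' M N := (blk_mul M N).symm
  map_zero' := by ext ⟨x, i⟩ ⟨y, j⟩; by_cases h : x = y <;> simp [blk, h]
  map_add' M N := (blk_add M N).symm
  commutes' c := by
    show blk (fun _ => algebraMap ℝ _ c) = _
    rw [Algebra.algebraMap_eq_smul_one, Algebra.algebraMap_eq_smul_one (A := Matrix (ι × Fin d) (ι × Fin d) ℂ)]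
    simp_rw [← blk_one, blk_smul]

lemma blk_conjTranspose (M : ι → Matrix (Fin d) (Fin d) ℂ) :
    (blk M)ᴴ = blk (fun x => (M x)ᴴ) := by
  ext ⟨x, i⟩ ⟨y, j⟩
  by_cases h : x = y
  · subst h; simp [blk, Matrix.conjTranspose_apply]
  · simp [blk, Matrix.conjTranspose_apply, h, Ne.symm h]

lemma blk_isHermitian {M : ι → Matrix (Fin d) (Fin d) ℂ} (hM : ∀ x, (M x).IsHermitian) :
    (blk M).IsHermitian := by
  unfold Matrix.IsHermitian
  rw [blk_conjTranspose]
  exact congrArg blk (funext fun x => hM x)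

lemma blk_trace (M : ι → Matrix (Fin d) (Fin d) ℂ) :
    (blk M).trace = ∑ x, (M x).trace := by
  simp [Matrix.trace, Fintype.sum_prod_type, blk, Matrix.diag]

end Blk

section Blk2
variable {ι : Type*} [Fintype ι] [DecidableEq ι] {d : ℕ}

lemma cfc_blk {M : ι → Matrix (Fin d) (Fin d) ℂ} (hM : ∀ x, (M x).IsHermitian) (f : ℝ → ℝ) :
    cfc f (blk M) = blk (fun x => cfc f (M x)) := by
  have hD : (blk M).IsHermitian := blk_isHermitian hM
  have hD' : IsSelfAdjoint (blk M) := hD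
  have hfin : (spectrum ℝ (blk M) ∪ ⋃ x, spectrum ℝ (M x)).Finite :=
    Matrix.finite_real_spectrum.union (Set.finite_iUnion fun _ => Matrix.finite_real_spectrum)
  set S := hfin.toFinset with hS
  set P : Polynomial ℝ := Lagrange.interpolate S id f with hPdef
  have hP : ∀ t ∈ S, Polynomial.eval t P = f t := fun t ht =>
    Lagrange.eval_interpolate_at_node f (Set.injOn_id _) ht
  have h1 : cfc f (blk M) = cfc P.eval (blk M) :=
    cfc_congr fun t ht => (hP t (hfin.mem_toFinset.2 (Or.inl ht))).symm
  have h2 : ∀ x, cfc f (M x) = cfc P.eval (M x) := fun x =>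
    cfc_congr fun t ht =>
      (hP t (hfin.mem_toFinset.2 (Or.inr (Set.mem_iUnion.2 ⟨x, ht⟩)))).symm
  rw [h1, cfc_polynomial P (blk M) hD']
  have h3 : Polynomial.aeval (blk M) P = blkAlgHom (Polynomial.aeval M P) := by
    exact Polynomial.aeval_algHom_apply blkAlgHom M P
  rw [h3]
  show blk _ = _
  refine congrArg blk (funext fun x => ?_)
  have h4 : (Polynomial.aeval M P) x = Polynomial.aeval (M x) P :=
    (Polynomial.aeval_algHom_apply (Pi.evalAlgHom ℝ (fun _ => Matrix (Fin d) (Fin d) ℂ) x) M P).symm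
  rw [h4]
  exact (((h2 x).trans (cfc_polynomial P (M x) (hM x))).symm)

lemma mpow_blk {M : ι → Matrix (Fin d) (Fin d) ℂ} (hM : ∀ x, (M x).IsHermitian) (r : ℝ) :
    mpow (blk M) r = blk (fun x => mpow (M x) r) :=
  cfc_blk hM _

end Blk2

lemma contOn_finite (f : ℝ → ℝ) {s : Set ℝ} (hs : s.Finite) : ContinuousOn f s := by
  rw [continuousOn_iff_continuous_restrict]
  have : Finite s := hs.to_subtype
  exact continuous_of_discreteTopology

lemma isHermitian_real_smul {A : Matrix n n ℂ} (hA : A.IsHermitian) (c : ℝ) :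
    (c • A).IsHermitian := by
  unfold Matrix.IsHermitian
  rw [Matrix.conjTranspose_smul, star_trivial, hA.eq]

lemma spec_nonneg {A : Matrix n n ℂ} (hA : A.PosSemidef) : spectrum ℝ A ⊆ Set.Ici 0 := by
  intro t ht
  rw [hA.1.spectrum_real_eq_range_eigenvalues] at ht
  obtain ⟨i, rfl⟩ := ht
  exact hA.eigenvalues_nonneg i

lemma mpow_smul {A : Matrix n n ℂ} (hA : A.IsHermitian) (hspec : spectrum ℝ A ⊆ Set.Ici 0)
    {c : ℝ} (hc : 0 < c) (r : ℝ) : mpow (c • A) r = (c ^ r) • mpow A r := by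
  have hA' : IsSelfAdjoint A := hA
  unfold mpow
  rw [← cfc_comp_smul c (fun x : ℝ => x ^ r) A
    (contOn_finite _ (Matrix.finite_real_spectrum.image _)) hA']
  have h1 : cfc (fun x : ℝ => (c • x) ^ r) A = cfc (fun x : ℝ => c ^ r • x ^ r) A := by
    apply cfc_congr
    intro t ht
    have ht0 : 0 ≤ t := hspec ht
    simp only [smul_eq_mul]
    rw [Real.mul_rpow hc.le ht0]
  rw [h1]
  exact cfc_smul (c ^ r) (fun x : ℝ => x ^ r) A (contOn_spec _ _)

lemma trace_cfc {A : Matrix n n ℂ} (hA : A.IsHermitian) (f : ℝ → ℝ) :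
    (cfc f A).trace = ((∑ i, f (hA.eigenvalues i) : ℝ) : ℂ) := by
  rw [hA.cfc_eq, Matrix.IsHermitian.cfc, Unitary.conjStarAlgAut_apply, Matrix.trace_mul_cycle,
    Unitary.star_mul_self_of_mem (SetLike.coe_mem _), one_mul, Matrix.trace_diagonal]
  push_cast
  rfl

lemma trace_mpow_pos {P : Matrix n n ℂ} (hP : P.PosSemidef) (hP0 : P ≠ 0) (e : ℝ) :
    0 < ((mpow P e).trace).re := by
  have hH := hP.1
  rw [mpow, trace_cfc hH]
  simp only [Complex.ofReal_re]
  have hnn : ∀ i, 0 ≤ hH.eigenvalues i := hP.eigenvalues_nonneg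
  have hne : ∃ i, hH.eigenvalues i ≠ 0 := by
    by_contra h
    push_neg at h
    apply hP0
    rw [hH.spectral_theorem]
    have h0 : (Matrix.diagonal (RCLike.ofReal ∘ hH.eigenvalues) : Matrix n n ℂ) = 0 := by
      ext i j
      by_cases hij : i = j <;> simp [Matrix.diagonal, hij, h]
    rw [Unitary.conjStarAlgAut_apply, h0, Matrix.mul_zero, Matrix.zero_mul]
  obtain ⟨i, hi⟩ := hne
  exact Finset.sum_pos' (fun j _ => Real.rpow_nonneg (hnn j) e)
    ⟨i, Finset.mem_univ i, Real.rpow_pos_of_pos ((hnn i).lt_of_ne (Ne.symm hi)) e⟩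

lemma mpow_isUnit {σ : Matrix n n ℂ} (hσ : σ.PosDef) (r : ℝ) : IsUnit (mpow σ r) := by
  have hH : IsSelfAdjoint σ := hσ.1
  have hspec : ∀ t ∈ spectrum ℝ σ, 0 < t := by
    intro t ht
    rw [hσ.1.spectrum_real_eq_range_eigenvalues] at ht
    obtain ⟨i, rfl⟩ := ht
    exact hσ.eigenvalues_pos i
  have key : ∀ s : ℝ, mpow σ s * mpow σ (-s) = 1 := by
    intro s
    unfold mpow
    rw [← cfc_mul _ _ σ (contOn_spec _ _) (contOn_spec _ _)]
    calc cfc (fun x : ℝ => x ^ s * x ^ (-s)) σ = cfc (fun _ : ℝ => (1:ℝ)) σ :=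
          cfc_congr fun t ht => by
            rw [← Real.rpow_add (hspec t ht), add_neg_cancel, Real.rpow_zero]
      _ = 1 := cfc_const_one ℝ σ hH
  have h2 : mpow σ (-r) * mpow σ r = 1 := by
    have := key (-r)
    rwa [neg_neg] at this
  exact ⟨⟨_, _, key r, h2⟩, rfl⟩

lemma logb_rpow' {y : ℝ} (hy : 0 < y) (e : ℝ) :
    Real.logb 2 (y ^ e) = e * Real.logb 2 y := by
  unfold Real.logb
  rw [Real.log_rpow hy]
  ring

/-- for classical-quantum block-diagonal operators,
`ν_α(Y_XB‖σ_XB) ≥ Σ_x p(x) ν_α(Y_B^x‖σ_B^x) + ((α-1)/α) D(p‖q)`. -/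
theorem nuAlpha_block_diagonal {ι : Type*} [Fintype ι] [DecidableEq ι] {d : ℕ}
    (p q : ι → ℝ) (hp : ∀ x, 0 < p x) (hpsum : ∑ x, p x = 1) (hq : ∀ x, 0 < q x)
    (Yb : ι → Matrix (Fin d) (Fin d) ℂ) (hYbH : ∀ x, (Yb x).IsHermitian)
    (hYb0 : ∀ x, Yb x ≠ 0)
    (σb : ι → Matrix (Fin d) (Fin d) ℂ) (hσb : ∀ x, (σb x).PosDef)
    (Y σ : Matrix (ι × Fin d) (ι × Fin d) ℂ)
    (hY : Y = fun a b => if a.1 = b.1 then (p a.1 : ℂ) * Yb a.1 a.2 b.2 else 0)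
    (hσ : σ = fun a b => if a.1 = b.1 then (q a.1 : ℂ) * σb a.1 a.2 b.2 else 0)
    (α : ℝ) (hα : 1 < α) :
    ∑ x, p x * Real.logb 2 (muAlpha α (Yb x) (σb x))
        + ((α - 1) / α) * ∑ x, p x * Real.logb 2 (p x / q x)
      ≤ Real.logb 2 (muAlpha α Y σ) := by
  have hα0 : (0:ℝ) < α := lt_trans one_pos hα
  have hι : Nonempty ι := by
    by_contra h
    rw [not_nonempty_iff] at h
    rw [Finset.univ_eq_empty, Finset.sum_empty] at hpsum
    exact zero_ne_one hpsum
  set r : ℝ := (1 - α) / (2 * α) with hr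
  set Zb : ι → Matrix (Fin d) (Fin d) ℂ :=
    fun x => mpow (σb x) r * Yb x * mpow (σb x) r with hZb
  set T : ι → ℝ := fun x => ((mpow ((Zb x)ᴴ * Zb x) (α/2)).trace).re with hT
  set c : ι → ℝ := fun x => p x * (q x ^ r * q x ^ r) with hc
  have hqr : ∀ x, 0 < q x ^ r := fun x => Real.rpow_pos_of_pos (hq x) r
  have hcpos : ∀ x, 0 < c x := fun x => mul_pos (hp x) (mul_pos (hqr x) (hqr x))
  -- Zb x ≠ 0
  have hZb0 : ∀ x, Zb x ≠ 0 := by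
    intro x hx
    obtain ⟨u, hu⟩ := mpow_isUnit (hσb x) r
    apply hYb0 x
    have h1 : mpow (σb x) r * (Yb x * mpow (σb x) r) = 0 := by
      rw [← mul_assoc]; exact hx
    have hu' : IsUnit (mpow (σb x) r) := ⟨u, hu⟩
    have h2 : Yb x * mpow (σb x) r = 0 := (hu'.mul_right_eq_zero).1 h1
    exact (hu'.mul_left_eq_zero).1 h2
  have hTpos : ∀ x, 0 < T x := by
    intro x
    refine trace_mpow_pos (Matrix.posSemidef_conjTranspose_mul_self _) ?_ (α/2)
    rw [Ne, Matrix.conjTranspose_mul_self_eq_zero]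
    exact hZb0 x
  have hμ : ∀ x, muAlpha α (Yb x) (σb x) = T x ^ (1/α) := fun x => rfl
  -- block identifications
  have hσblk : σ = blk (fun x => q x • σb x) := by
    rw [hσ]
    funext a b
    by_cases h : a.1 = b.1 <;> simp [blk, h, Matrix.smul_apply, Complex.real_smul]
  have hYblk : Y = blk (fun x => p x • Yb x) := by
    rw [hY]
    funext a b
    by_cases h : a.1 = b.1 <;> simp [blk, h, Matrix.smul_apply, Complex.real_smul]
  have hmσ : mpow σ r = blk (fun x => q x ^ r • mpow (σb x) r) := by
    rw [hσblk, mpow_blk (fun x => isHermitian_real_smul (hσb x).1 (q x)) r]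
    refine congrArg blk (funext fun x => ?_)
    exact mpow_smul (hσb x).1 (spec_nonneg (hσb x).posSemidef) (hq x) r
  have hZ : mpow σ r * Y * mpow σ r = blk (fun x => c x • Zb x) := by
    rw [hmσ, hYblk, blk_mul, blk_mul]
    refine congrArg blk (funext fun x => ?_)
    simp only [hZb, hc, smul_mul_assoc, mul_smul_comm, smul_smul, mul_assoc]
    congr 1
    ring
  have hZH : (blk (fun x => c x • Zb x))ᴴ * blk (fun x => c x • Zb x)
      = blk (fun x => (c x * c x) • ((Zb x)ᴴ * Zb x)) := by
    rw [blk_conjTranspose, blk_mul]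
    refine congrArg blk (funext fun x => ?_)
    rw [Matrix.conjTranspose_smul, star_trivial, smul_mul_assoc, mul_smul_comm, smul_smul]
  have hZbH : ∀ x, ((c x * c x) • ((Zb x)ᴴ * Zb x)).IsHermitian := fun x =>
    isHermitian_real_smul (Matrix.posSemidef_conjTranspose_mul_self (Zb x)).1 _
  have hmZ : mpow (blk (fun x => (c x * c x) • ((Zb x)ᴴ * Zb x))) (α/2)
      = blk (fun x => ((c x * c x) ^ (α/2)) • mpow ((Zb x)ᴴ * Zb x) (α/2)) := by
    rw [mpow_blk (fun x => hZbH x) (α/2)]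
    refine congrArg blk (funext fun x => ?_)
    exact mpow_smul (Matrix.posSemidef_conjTranspose_mul_self (Zb x)).1
      (spec_nonneg (Matrix.posSemidef_conjTranspose_mul_self (Zb x)))
      (mul_pos (hcpos x) (hcpos x)) (α/2)
  have hcc : ∀ x, (c x * c x) ^ (α/2) = c x ^ α := by
    intro x
    rw [Real.mul_rpow (hcpos x).le (hcpos x).le, ← Real.rpow_add (hcpos x)]
    norm_num
  have hμY : muAlpha α Y σ = (∑ x, c x ^ α * T x) ^ (1/α) := by
    unfold muAlpha schattenNorm
    rw [← hr, hZ, hZH, hmZ, blk_trace]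
    congr 2
    rw [Complex.re_sum]
    refine Finset.sum_congr rfl fun x _ => ?_
    rw [Matrix.trace_smul, ← hcc x]
    simp [Complex.real_smul, Complex.mul_re]
    exact Or.inl rfl
  set t : ι → ℝ := fun x => c x ^ α * T x with ht
  have htpos : ∀ x, 0 < t x := fun x =>
    mul_pos (Real.rpow_pos_of_pos (hcpos x) α) (hTpos x)
  have hsumt : 0 < ∑ x, t x :=
    Finset.sum_pos (fun x _ => htpos x) Finset.univ_nonempty
  -- Jensen via weighted AM-GM
  have jensen : ∑ x, p x * Real.logb 2 (t x / p x) ≤ Real.logb 2 (∑ x, t x) := by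
    have hgm := Real.geom_mean_le_arith_mean_weighted Finset.univ p (fun x => t x / p x)
      (fun i _ => (hp i).le) hpsum (fun i _ => (div_pos (htpos i) (hp i)).le)
    have hsum : ∑ x, p x * (t x / p x) = ∑ x, t x := by
      refine Finset.sum_congr rfl fun x _ => ?_
      rw [mul_comm (p x) (t x / p x), div_mul_cancel₀ _ (hp x).ne']
    rw [hsum] at hgm
    have hprodpos : 0 < ∏ x, (t x / p x) ^ (p x) :=
      Finset.prod_pos fun i _ => Real.rpow_pos_of_pos (div_pos (htpos i) (hp i)) _
    calc ∑ x, p x * Real.logb 2 (t x / p x)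
        = Real.logb 2 (∏ x, (t x / p x) ^ p x) := by
          unfold Real.logb
          rw [Real.log_prod fun i _ =>
            (Real.rpow_pos_of_pos (div_pos (htpos i) (hp i)) _).ne', Finset.sum_div]
          refine Finset.sum_congr rfl fun x _ => ?_
          rw [Real.log_rpow (div_pos (htpos x) (hp x))]
          ring
      _ ≤ Real.logb 2 (∑ x, t x) :=
          Real.logb_le_logb_of_le (by norm_num) hprodpos hgm
  -- algebraic identity
  have hident : ∑ x, p x * Real.logb 2 (muAlpha α (Yb x) (σb x))
        + ((α - 1) / α) * ∑ x, p x * Real.logb 2 (p x / q x)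
      = (1/α) * ∑ x, p x * Real.logb 2 (t x / p x) := by
    rw [Finset.mul_sum, Finset.mul_sum, ← Finset.sum_add_distrib]
    refine Finset.sum_congr rfl fun x _ => ?_
    rw [hμ x, logb_rpow' (hTpos x)]
    have h1 : Real.logb 2 (t x / p x)
        = α * Real.logb 2 (c x) + Real.logb 2 (T x) - Real.logb 2 (p x) := by
      rw [Real.logb_div (htpos x).ne' (hp x).ne', Real.logb_mul
        (Real.rpow_pos_of_pos (hcpos x) α).ne' (hTpos x).ne', logb_rpow' (hcpos x)]
    have h2 : Real.logb 2 (c x)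
        = Real.logb 2 (p x) + 2 * (r * Real.logb 2 (q x)) := by
      rw [hc]
      rw [Real.logb_mul (hp x).ne' (mul_pos (hqr x) (hqr x)).ne',
        Real.logb_mul (hqr x).ne' (hqr x).ne', logb_rpow' (hq x)]
      ring
    have h3 : Real.logb 2 (p x / q x) = Real.logb 2 (p x) - Real.logb 2 (q x) :=
      Real.logb_div (hp x).ne' (hq x).ne'
    rw [h1, h2, h3, hr]
    field_simp
    ring
  rw [hident, hμY, logb_rpow' hsumt]
  exact mul_le_mul_of_nonneg_left jensen (by positivity)
end
end
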